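/- Let r ≥ 2 and let G, H be graphs with d(H) = 2e(H)/v(H) the average degree of H. Then the blowup Ramsey number B_r(G,H;t) = min{n : G[n] is canonically r-Ramsey for H[t]} satisfies B_r(G,H;t) ≥ (1 + o(1)) · (r^{d(H)/v(H)} / e) · t · r^{d(H)t/2} as t → ∞. -/

import Mathlib

open SimpleGraph Finset

variable {α β : Type*}

/-- `φ` is a copy (injective graph homomorphism) of `H` in `G`. -/
def IsCopy (H : SimpleGraph α) (G : SimpleGraph β) (φ : α → β) : Prop :=
  Function.Injective φ ∧ ∀ ⦃u v⦄, H.Adj u v → G.Adj (φ u) (φ v)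

/-- The copy `φ` of `H` is monochromatic under the edge colouring `c`. -/
def Mono (H : SimpleGraph α) (r : ℕ) (c : Sym2 β → Fin r) (φ : α → β) : Prop :=
  ∃ i : Fin r, ∀ ⦃u v⦄, H.Adj u v → c s(φ u, φ v) = i

/-- Number of monochromatic copies of `H` in `G` under colouring `c`. -/
noncomputable def monoCount (H : SimpleGraph α) (G : SimpleGraph β) (r : ℕ)
    (c : Sym2 β → Fin r) : ℕ :=
  Nat.card {φ : α → β // IsCopy H G φ ∧ Mono H r c φ}

/-- `M r H G`: the minimum number of monochromatic copies of `H`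
over all `r`-colourings of `G`. -/
noncomputable def M (r : ℕ) (H : SimpleGraph α) (G : SimpleGraph β) : ℕ :=
  sInf (Set.range (monoCount H G r))

/-- `G` is `r`-Ramsey for `H`. -/
def IsRamsey (r : ℕ) (H : SimpleGraph α) (G : SimpleGraph β) : Prop :=
  ∀ c : Sym2 β → Fin r, ∃ φ : α → β, IsCopy H G φ ∧ Mono H r c φ

/-- The `n`-blowup of `G`. -/
def blowup (G : SimpleGraph β) (n : ℕ) : SimpleGraph (β × Fin n) where
  Adj a b := G.Adj a.1 b.1
  symm := ⟨fun _ _ h => G.adj_symm h⟩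
  loopless := ⟨fun a h => G.irrefl (v := a.1) h⟩

/-- There is a monochromatic canonical copy of the blowup `H[t]` (part sizes `t u`)
in the `n`-blowup of `G` under the colouring `c`. -/
def MonoCanonBlowup (H : SimpleGraph α) (G : SimpleGraph β) (n r : ℕ)
    (t : α → ℕ) (c : Sym2 (β × Fin n) → Fin r) : Prop :=
  ∃ (φ : α → β) (S : α → Finset (Fin n)) (i : Fin r),
    IsCopy H G φ ∧ (∀ u, (S u).card = t u) ∧
    ∀ ⦃u v⦄, H.Adj u v → ∀ a ∈ S u, ∀ b ∈ S v, c s((φ u, a), (φ v, b)) = i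

open Finset


lemma pow_self_le_factorial_mul_exp : ∀ t : ℕ, (t:ℝ)^t ≤ (t.factorial : ℝ) * Real.exp 1 ^ t := by
  intro t
  induction t with
  | zero => simp
  | succ t ih =>
    rcases Nat.eq_zero_or_pos t with rfl | ht0
    · simpa using Real.one_le_exp (by norm_num)
    have ht0' : (0:ℝ) < t := by exact_mod_cast ht0
    have h1 : ((t+1:ℕ):ℝ)^t ≤ (t:ℝ)^t * Real.exp 1 := by
      have h2 : ((t+1:ℕ):ℝ) = (t:ℝ) * (1 + 1/(t:ℝ)) := by
        push_cast; field_simp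
      rw [h2, mul_pow]
      apply mul_le_mul_of_nonneg_left _ (by positivity)
      have h3 : (1 + 1/(t:ℝ)) ≤ Real.exp (1/(t:ℝ)) := by
        have := Real.add_one_le_exp (1/(t:ℝ)); linarith
      calc (1 + 1/(t:ℝ))^t ≤ (Real.exp (1/(t:ℝ)))^t := by
            apply pow_le_pow_left₀ (by positivity) h3
        _ = Real.exp ((t:ℝ) * (1/(t:ℝ))) := by rw [← Real.exp_nat_mul]
        _ = Real.exp 1 := by rw [mul_one_div, div_self (ne_of_gt ht0')]
    calc ((t+1:ℕ):ℝ)^(t+1) = ((t+1:ℕ):ℝ) * ((t+1:ℕ):ℝ)^t := by ring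
      _ ≤ ((t+1:ℕ):ℝ) * ((t:ℝ)^t * Real.exp 1) := by
          apply mul_le_mul_of_nonneg_left h1 (by positivity)
      _ ≤ ((t+1:ℕ):ℝ) * (((t.factorial : ℝ) * Real.exp 1 ^ t) * Real.exp 1) := by
          have := Real.exp_pos 1
          apply mul_le_mul_of_nonneg_left _ (by positivity)
          apply mul_le_mul_of_nonneg_right ih (by positivity)
      _ = ((t+1).factorial : ℝ) * Real.exp 1 ^ (t+1) := by
          rw [Nat.factorial_succ]
          push_cast
          ring

lemma numeric (m V t : ℕ) (r n ε : ℝ)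
    (hm : 1 ≤ m) (hV : 2 ≤ V) (ht : 2 ≤ t) (hr : 1 ≤ r) (hn : 0 ≤ n)
    (hε1 : 0 < 1 - ε)
    (hX : n ≤ (1 - ε) * (r ^ ((2*(m:ℝ)/(V:ℝ))/(V:ℝ)) / Real.exp 1) * t
        * r ^ ((2*(m:ℝ)/(V:ℝ)) * (t:ℝ)/2)) :
    (n:ℝ) ^ (t*V - 2) * (Real.exp 1 ^ t / (t:ℝ)^t) ^ V * (t:ℝ)^4
        * ((r:ℝ) ^ (m * t^2))⁻¹
      ≤ Real.exp 1 ^ 2 * (t:ℝ)^2 * (1-ε)^(t*V-2) := by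
  have hr0 : (0:ℝ) < r := lt_of_lt_of_le one_pos hr
  have hV0 : (0:ℝ) < (V:ℝ) := by
    have : 0 < V := by omega
    exact_mod_cast this
  have ht0 : (0:ℝ) < (t:ℝ) := by
    have : 0 < t := by omega
    exact_mod_cast this
  have htV : 2 + 2 ≤ t * V := Nat.mul_le_mul ht hV
  have hexp0 : (0:ℝ) < Real.exp 1 := Real.exp_pos 1
  set d : ℝ := 2*(m:ℝ)/(V:ℝ) with hd
  set a : ℝ := d/(V:ℝ) + d*(t:ℝ)/2 with ha
  set M : ℕ := t*V - 2 with hM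
  have hMeq : t * V = M + 2 := by omega
  have hMr : (M:ℝ) = (t:ℝ)*(V:ℝ) - 2 := by
    rw [hM]
    rw [Nat.cast_sub (by omega)]
    push_cast
    ring
  set X : ℝ := (1-ε) * (t:ℝ) * (Real.exp 1)⁻¹ * r ^ a with hXdef
  have hX2 : n ≤ X := by
    rw [hXdef, ha, Real.rpow_add hr0]
    calc n ≤ (1 - ε) * (r ^ (d/(V:ℝ)) / Real.exp 1) * t * r ^ (d * (t:ℝ)/2) := hX
      _ = (1-ε) * (t:ℝ) * (Real.exp 1)⁻¹ * (r ^ (d/(V:ℝ)) * r ^ (d*(t:ℝ)/2)) := by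
          ring
  have hX0 : 0 ≤ X := le_trans hn hX2
  have hd0 : 0 ≤ d := by positivity
  -- the exponent computation
  have haM : a * (M:ℝ) - (m:ℝ)*(t:ℝ)^2 = -(2*d/(V:ℝ)) := by
    rw [hMr, ha, hd]
    field_simp
    ring
  -- the r-power is at most 1
  have hRR : (r ^ a)^M * ((r:ℝ) ^ (m * t^2))⁻¹ ≤ 1 := by
    have h1 : (r ^ a)^M * ((r:ℝ) ^ (m * t^2))⁻¹ = r ^ (a * (M:ℝ) - (m:ℝ)*(t:ℝ)^2) := by
      rw [← Real.rpow_natCast (r ^ a) M, ← Real.rpow_mul hr0.le,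
        ← Real.rpow_natCast r (m * t^2), ← Real.rpow_neg hr0.le,
        ← Real.rpow_add hr0]
      congr 1
      push_cast
      ring
    rw [h1, haM]
    apply Real.rpow_le_one_of_one_le_of_nonpos hr
    have : 0 ≤ 2*d/(V:ℝ) := by positivity
    linarith
  calc (n:ℝ) ^ M * (Real.exp 1 ^ t / (t:ℝ)^t) ^ V * (t:ℝ)^4 * ((r:ℝ) ^ (m * t^2))⁻¹
      ≤ X ^ M * (Real.exp 1 ^ t / (t:ℝ)^t) ^ V * (t:ℝ)^4 * ((r:ℝ) ^ (m * t^2))⁻¹ := by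
        have hposrest : (0:ℝ) ≤ (Real.exp 1 ^ t / (t:ℝ)^t) ^ V * (t:ℝ)^4
            * ((r:ℝ) ^ (m * t^2))⁻¹ := by positivity
        have := pow_le_pow_left₀ hn hX2 M
        calc (n:ℝ) ^ M * (Real.exp 1 ^ t / (t:ℝ)^t) ^ V * (t:ℝ)^4 * ((r:ℝ) ^ (m * t^2))⁻¹
            = (n:ℝ) ^ M * ((Real.exp 1 ^ t / (t:ℝ)^t) ^ V * (t:ℝ)^4 * ((r:ℝ) ^ (m * t^2))⁻¹) := by ring
          _ ≤ X ^ M * ((Real.exp 1 ^ t / (t:ℝ)^t) ^ V * (t:ℝ)^4 * ((r:ℝ) ^ (m * t^2))⁻¹) :=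
              mul_le_mul_of_nonneg_right this hposrest
          _ = X ^ M * (Real.exp 1 ^ t / (t:ℝ)^t) ^ V * (t:ℝ)^4 * ((r:ℝ) ^ (m * t^2))⁻¹ := by ring
    _ = Real.exp 1 ^ 2 * (t:ℝ)^2 * (1-ε)^M * ((r ^ a)^M * ((r:ℝ) ^ (m * t^2))⁻¹) := by
        rw [hXdef]
        have hc1 : ∀ x : ℝ, (x^t)^V = x^M * x^2 := by
          intro x
          rw [← pow_mul, hMeq, pow_add]
        rw [div_pow, hc1, hc1, mul_pow, mul_pow, mul_pow]
        have h1 : (t:ℝ) ≠ 0 := ne_of_gt ht0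
        have h2 : Real.exp 1 ≠ 0 := ne_of_gt hexp0
        have h3 : ((r:ℝ) ^ (m * t^2)) ≠ 0 := by positivity
        field_simp
        ring_nf
        rw [← mul_pow, mul_inv_cancel₀ h2, one_pow]
    _ ≤ Real.exp 1 ^ 2 * (t:ℝ)^2 * (1-ε)^M * 1 := by
        apply mul_le_mul_of_nonneg_left hRR
        positivity
    _ = Real.exp 1 ^ 2 * (t:ℝ)^2 * (1-ε)^M := by ring


lemma choose_le_real (n t : ℕ) (ht : 1 ≤ t) :
    ((n.choose t : ℕ):ℝ) ≤ (n:ℝ)^t * (Real.exp 1 ^ t / (t:ℝ)^t) := by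
  have ht0 : (0:ℝ) < (t:ℝ) := by exact_mod_cast ht
  have hfac : (0:ℝ) < (t.factorial : ℝ) := by exact_mod_cast t.factorial_pos
  have h1 : ((n.choose t : ℕ):ℝ) ≤ (n:ℝ)^t / (t.factorial:ℝ) := by
    exact_mod_cast Nat.choose_le_pow_div t n
  have h2 : (n:ℝ)^t / (t.factorial:ℝ) ≤ (n:ℝ)^t * (Real.exp 1 ^ t / (t:ℝ)^t) := by
    rw [mul_div_assoc', div_le_div_iff₀ hfac (by positivity)]
    have hkey := pow_self_le_factorial_mul_exp t
    have hnn : (0:ℝ) ≤ (n:ℝ)^t := by positivity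
    nlinarith [mul_le_mul_of_nonneg_left hkey hnn]
  linarith

lemma eventually_small (K g : ℝ) (hg0 : 0 ≤ g) (hg1 : g < 1) :
    ∃ T : ℕ, ∀ t : ℕ, T ≤ t → K * t^2 * g^t ≤ 1/4 := by
  have hsum : Summable (fun t : ℕ => (t:ℝ)^2 * g^t) := by
    apply summable_pow_mul_geometric_of_norm_lt_one
    rw [Real.norm_eq_abs, abs_of_nonneg hg0]
    exact hg1
  have htend : Filter.Tendsto (fun t : ℕ => (t:ℝ)^2 * g^t) Filter.atTop (nhds 0) :=
    hsum.tendsto_atTop_zero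
  have htend2 : Filter.Tendsto (fun t : ℕ => K * ((t:ℝ)^2 * g^t)) Filter.atTop (nhds 0) := by
    simpa using htend.const_mul K
  have hev : ∀ᶠ t : ℕ in Filter.atTop, K * ((t:ℝ)^2 * g^t) < 1/4 :=
    htend2.eventually_lt_const (by norm_num)
  obtain ⟨T, hT⟩ := Filter.eventually_atTop.1 hev
  exact ⟨T, fun t htT => by
    have := hT t htT
    calc K * (t:ℝ)^2 * g^t = K * ((t:ℝ)^2 * g^t) := by ring
      _ ≤ 1/4 := le_of_lt this⟩

namespace LLLAux

variable {E γ ι : Type*} [Fintype E] [DecidableEq E] [Fintype γ] [DecidableEq γ]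
  [Nonempty γ] [Fintype ι] [DecidableEq ι]

/-- The event `A` is determined by the coordinates in `F`. -/
def DeterminedBy (A : Finset (E → γ)) (F : Finset E) : Prop :=
  ∀ ω ω' : E → γ, (∀ e ∈ F, ω e = ω' e) → ω ∈ A → ω' ∈ A

lemma indep_card (A B : Finset (E → γ)) (F : Finset E)
    (hA : DeterminedBy A F)
    (hB : ∀ ω ω' : E → γ, (∀ e ∉ F, ω e = ω' e) → ω ∈ B → ω' ∈ B) :
    (A ∩ B).card * Fintype.card (E → γ) = A.card * B.card := by
  classical
  have key : ((A ∩ B) ×ˢ (univ : Finset (E → γ))).card = (A ×ˢ B).card := by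
    apply Finset.card_nbij'
      (i := fun x => (fun e => if e ∈ F then x.1 e else x.2 e,
                      fun e => if e ∈ F then x.2 e else x.1 e))
      (j := fun x => (fun e => if e ∈ F then x.1 e else x.2 e,
                      fun e => if e ∈ F then x.2 e else x.1 e))
    · intro x hx
      rw [mem_coe, mem_product] at hx
      rw [mem_coe, mem_product]
      obtain ⟨hx1, -⟩ := hx
      rw [mem_inter] at hx1
      constructor
      · exact hA x.1 _ (fun e he => by simp [he]) hx1.1
      · exact hB x.1 _ (fun e he => by simp [he]) hx1.2
    · intro x hx
      rw [mem_coe, mem_product] at hx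
      rw [mem_coe, mem_product, mem_inter]
      refine ⟨⟨?_, ?_⟩, mem_univ _⟩
      · exact hA x.1 _ (fun e he => by simp [he]) hx.1
      · exact hB x.2 _ (fun e he => by simp [he]) hx.2
    · intro x hx
      ext e <;> by_cases he : e ∈ F <;> simp [he]
    · intro x hx
      ext e <;> by_cases he : e ∈ F <;> simp [he]
  simpa [Finset.card_product, mul_comm] using key

set_option linter.unusedSectionVars false

variable (A : ι → Finset (E → γ))

/-- Colourings avoiding all events indexed by `S`. -/
noncomputable def NN (S : Finset ι) : Finset (E → γ) :=
  univ.filter (fun ω => ∀ j ∈ S, ω ∉ A j)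

lemma NN_mono {S S' : Finset ι} (h : S' ⊆ S) : NN A S ⊆ NN A S' := by
  intro ω hω
  rw [NN, mem_filter] at hω ⊢
  exact ⟨mem_univ _, fun j hj => hω.2 j (h hj)⟩

variable (Fam : ι → Finset E)

lemma indep_step (hdet : ∀ i, DeterminedBy (A i) (Fam i))
    {p : ℝ} (hp : ∀ i, ((A i).card : ℝ) ≤ p * Fintype.card (E → γ))
    (S : Finset ι) (i : ι) (hdisj : ∀ j ∈ S, Fam j ∩ Fam i = ∅) :
    ((A i ∩ NN A S).card : ℝ) ≤ p * (NN A S).card := by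
  classical
  have hB : ∀ ω ω' : E → γ, (∀ e ∉ Fam i, ω e = ω' e) → ω ∈ NN A S → ω' ∈ NN A S := by
    intro ω ω' hagree hω
    rw [NN, mem_filter] at hω ⊢
    refine ⟨mem_univ _, fun j hj hmem => hω.2 j hj ?_⟩
    refine hdet j ω' ω (fun e he => ?_) hmem
    have : e ∉ Fam i := by
      intro hei
      have : e ∈ Fam j ∩ Fam i := mem_inter.2 ⟨he, hei⟩
      simp [hdisj j hj] at this
    exact (hagree e this).symm
  have hkey := indep_card (A i) (NN A S) (Fam i) (hdet i) hB
  have hΩ : (0 : ℝ) < Fintype.card (E → γ) := by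
    have : 0 < Fintype.card (E → γ) := Fintype.card_pos
    exact_mod_cast this
  have hkey' : ((A i ∩ NN A S).card : ℝ) * Fintype.card (E → γ)
      = (A i).card * (NN A S).card := by exact_mod_cast congrArg Nat.cast hkey
  rw [← mul_le_mul_iff_of_pos_right hΩ, hkey']
  calc ((A i).card : ℝ) * (NN A S).card ≤ (p * Fintype.card (E → γ)) * (NN A S).card := by
        apply mul_le_mul_of_nonneg_right (hp i) (by positivity)
    _ = p * (NN A S).card * Fintype.card (E → γ) := by ring

lemma lll_claim (hdet : ∀ i, DeterminedBy (A i) (Fam i))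
    {p : ℝ} (hp0 : 0 ≤ p)
    (hp : ∀ i, ((A i).card : ℝ) ≤ p * Fintype.card (E → γ)) (D : ℕ)
    (hD : ∀ i, ((univ.filter fun j => ((Fam j) ∩ (Fam i)).Nonempty).card ≤ D + 1))
    (hpD : p * D ≤ 1/4) :
    ∀ k : ℕ, ∀ S : Finset ι, S.card ≤ k → ∀ i, i ∉ S →
      ((A i ∩ NN A S).card : ℝ) ≤ 2 * p * (NN A S).card := by
  classical
  intro k
  induction k with
  | zero =>
    intro S hS i _
    have hS0 : S = ∅ := card_eq_zero.1 (Nat.le_zero.1 hS)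
    subst hS0
    calc ((A i ∩ NN A ∅).card : ℝ) ≤ p * (NN A ∅).card :=
          indep_step A Fam hdet hp ∅ i (by simp)
      _ ≤ 2 * p * (NN A ∅).card := by
          have hx : (0:ℝ) ≤ ((NN A (∅ : Finset ι)).card : ℝ) := Nat.cast_nonneg _
          nlinarith
  | succ k ih =>
    intro S hS i hiS
    set S1 : Finset ι := S.filter (fun j => (Fam j ∩ Fam i).Nonempty) with hS1def
    set S2 : Finset ι := S \ S1 with hS2def
    by_cases hS1e : S1 = ∅
    · have hdisj : ∀ j ∈ S, Fam j ∩ Fam i = ∅ := by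
        intro j hj
        by_contra hne
        have : j ∈ S1 := mem_filter.2 ⟨hj, Finset.nonempty_iff_ne_empty.2 hne⟩
        simp [hS1e] at this
      calc ((A i ∩ NN A S).card : ℝ) ≤ p * (NN A S).card :=
            indep_step A Fam hdet hp S i hdisj
        _ ≤ 2 * p * (NN A S).card := by
            have hx : (0:ℝ) ≤ ((NN A S).card : ℝ) := Nat.cast_nonneg _
            nlinarith
    · -- S1 nonempty
      have hS1ne : S1.Nonempty := Finset.nonempty_iff_ne_empty.2 hS1e
      have hS21 : S2 ⊆ S := sdiff_subset
      have hcard2 : S2.card ≤ k := by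
        have h1 : 1 ≤ S1.card := Nat.one_le_iff_ne_zero.2 (by
          simpa [Finset.card_eq_zero] using hS1e)
        have hsub : S1 ⊆ S := filter_subset _ _
        have : S2.card = S.card - S1.card := card_sdiff_of_subset hsub
        omega
      have hdisj2 : ∀ j ∈ S2, Fam j ∩ Fam i = ∅ := by
        intro j hj
        rw [hS2def, mem_sdiff] at hj
        by_contra hne
        exact hj.2 (mem_filter.2 ⟨hj.1, Finset.nonempty_iff_ne_empty.2 hne⟩)
      -- step (a)
      have ha : ((A i ∩ NN A S).card : ℝ) ≤ p * (NN A S2).card := by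
        calc ((A i ∩ NN A S).card : ℝ) ≤ ((A i ∩ NN A S2).card : ℝ) := by
              exact_mod_cast card_le_card (inter_subset_inter (Finset.Subset.refl _)
                (NN_mono A hS21))
          _ ≤ p * (NN A S2).card := indep_step A Fam hdet hp S2 i hdisj2
      -- |S1| ≤ D
      have hS1card : S1.card ≤ D := by
        obtain ⟨j0, hj0⟩ := hS1ne
        have hFi : (Fam i).Nonempty := by
          obtain ⟨e, he⟩ := (mem_filter.1 hj0).2
          exact ⟨e, (mem_inter.1 he).2⟩
        have hi_mem : i ∈ univ.filter (fun j => ((Fam j) ∩ (Fam i)).Nonempty) := by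
          refine mem_filter.2 ⟨mem_univ _, ?_⟩
          simpa [Finset.inter_self] using hFi
        have hsub : S1 ⊆ (univ.filter (fun j => ((Fam j) ∩ (Fam i)).Nonempty)).erase i := by
          intro j hj
          refine mem_erase.2 ⟨?_, mem_filter.2 ⟨mem_univ _, (mem_filter.1 hj).2⟩⟩
          rintro rfl
          exact hiS (filter_subset _ _ hj)
        calc S1.card ≤ _ := card_le_card hsub
          _ = (univ.filter (fun j => ((Fam j) ∩ (Fam i)).Nonempty)).card - 1 :=
              card_erase_of_mem hi_mem
          _ ≤ D := by have := hD i; omega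
      -- step (b): card NN S ≥ 1/2 card NN S2
      have hb : (1/2 : ℝ) * (NN A S2).card ≤ (NN A S).card := by
        have hsub : NN A S2 \ NN A S ⊆ S1.biUnion (fun j => A j ∩ NN A S2) := by
          intro ω hω
          rw [mem_sdiff] at hω
          obtain ⟨hω2, hωS⟩ := hω
          rw [NN, mem_filter] at hωS
          push_neg at hωS
          obtain ⟨j, hjS, hjA⟩ := hωS (mem_univ _)
          have hj1 : j ∈ S1 := by
            by_contra hj1
            have hj2 : j ∈ S2 := mem_sdiff.2 ⟨hjS, hj1⟩
            exact (mem_filter.1 hω2).2 j hj2 hjA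
          exact mem_biUnion.2 ⟨j, hj1, mem_inter.2 ⟨hjA, hω2⟩⟩
        have hcount : ((NN A S2).card : ℝ) - (NN A S).card
            ≤ ∑ j ∈ S1, ((A j ∩ NN A S2).card : ℝ) := by
          have h1 : (NN A S2 \ NN A S).card ≤ ∑ j ∈ S1, (A j ∩ NN A S2).card :=
            le_trans (card_le_card hsub) (card_biUnion_le)
          have h2 : (NN A S2 \ NN A S).card = (NN A S2).card - (NN A S).card :=
            card_sdiff_of_subset (NN_mono A (by intro x hx; exact hS21 hx))
          have h3 : (NN A S).card ≤ (NN A S2).card := card_le_card (NN_mono A hS21)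
          push_cast [← Nat.cast_sum]
          rw [← Nat.cast_sub h3]
          exact_mod_cast h2 ▸ h1
        have hsum : ∑ j ∈ S1, ((A j ∩ NN A S2).card : ℝ)
            ≤ S1.card * (2 * p * (NN A S2).card) := by
          have := Finset.sum_le_card_nsmul S1 (fun j => ((A j ∩ NN A S2).card : ℝ))
            (2 * p * (NN A S2).card) (fun j hj => by
              refine ih S2 hcard2 j ?_
              intro hj2
              exact (hdisj2 j hj2 ▸ (mem_filter.1 hj).2).ne_empty rfl)
          simpa [nsmul_eq_mul] using this
        have hD' : (S1.card : ℝ) * (2 * p * (NN A S2).card)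
            ≤ (1/2 : ℝ) * (NN A S2).card := by
          have h1 : (S1.card : ℝ) ≤ D := by exact_mod_cast hS1card
          have hx : (0:ℝ) ≤ ((NN A S2).card : ℝ) := Nat.cast_nonneg _
          have h2 : (S1.card : ℝ) * p ≤ (D:ℝ) * p := by
            apply mul_le_mul_of_nonneg_right h1 hp0
          have h3 : (D:ℝ) * p ≤ 1/4 := by linarith [hpD, mul_comm p (D:ℝ)]
          nlinarith
        linarith
      calc ((A i ∩ NN A S).card : ℝ) ≤ p * (NN A S2).card := ha
        _ ≤ 2 * p * (NN A S).card := by nlinarith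


omit [Nonempty γ] in
lemma card_filter_const (F : Finset E) (i : γ) :
    (univ.filter fun c : E → γ => ∀ e ∈ F, c e = i).card
      = Fintype.card γ ^ (Fintype.card E - F.card) := by
  classical
  rw [← Fintype.card_subtype]
  have e1 : {c : E → γ // ∀ e ∈ F, c e = i} ≃ ({e : E // e ∉ F} → γ) :=
    { toFun := fun c e => c.1 e.1
      invFun := fun g => ⟨fun e => if h : e ∈ F then i else g ⟨e, h⟩,
        fun e he => by simp [he]⟩
      left_inv := fun c => Subtype.ext (funext fun e => by
        by_cases h : e ∈ F
        · simp [h, c.2 e h]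
        · simp [h])
      right_inv := fun g => funext fun e => by simp [e.2] }
  rw [Fintype.card_congr e1, Fintype.card_fun]
  congr 1
  rw [Fintype.card_subtype_compl, Fintype.card_coe]

lemma lll_exists (hdet : ∀ i, DeterminedBy (A i) (Fam i))
    {p : ℝ}
    (hp : ∀ i, ((A i).card : ℝ) ≤ p * Fintype.card (E → γ)) (D : ℕ)
    (hD : ∀ i, ((univ.filter fun j => ((Fam j) ∩ (Fam i)).Nonempty).card ≤ D + 1))
    (hp4 : p ≤ 1/4) (hpD : p * D ≤ 1/4) :
    ∃ ω : E → γ, ∀ i, ω ∉ A i := by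
  classical
  cases isEmpty_or_nonempty ι with
  | inl h =>
    exact ⟨Classical.arbitrary _, fun i => (h.false i).elim⟩
  | inr h =>
    have hΩ : (0 : ℝ) < Fintype.card (E → γ) := by
      exact_mod_cast (Fintype.card_pos : 0 < Fintype.card (E → γ))
    have hp0 : 0 ≤ p := by
      obtain ⟨i⟩ := h
      have h1 : (0:ℝ) ≤ ((A i).card : ℝ) := Nat.cast_nonneg _
      nlinarith [hp i]
    have claim := lll_claim A Fam hdet hp0 hp D hD hpD
    have pos : ∀ S : Finset ι, (1 - 2*p)^S.card * (Fintype.card (E → γ) : ℝ)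
        ≤ (NN A S).card := by
      intro S
      induction S using Finset.induction_on with
      | empty =>
        simp [NN, Finset.filter_true_of_mem]
      | insert _ _ hiS =>
        rename_i i S ih
        have hNins : NN A (insert i S) = NN A S \ (A i ∩ NN A S) := by
          ext ω
          simp only [NN, mem_filter, mem_univ, true_and, mem_sdiff, mem_inter,
            Finset.mem_insert]
          constructor
          · intro hω
            exact ⟨fun j hj => hω j (Or.inr hj), fun hc => hω i (Or.inl rfl) hc.1⟩
          · rintro ⟨h1, h2⟩ j hj
            rcases hj with rfl | hj
            · intro hA; exact h2 ⟨hA, h1⟩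
            · exact h1 j hj
        have hsub : A i ∩ NN A S ⊆ NN A S := inter_subset_right
        have hcard : ((NN A (insert i S)).card : ℝ)
            = (NN A S).card - (A i ∩ NN A S).card := by
          rw [hNins, card_sdiff_of_subset hsub]
          have := card_le_card hsub
          push_cast [Nat.cast_sub this]
          ring
        have hc := claim S.card S le_rfl i hiS
        have h2p : (0:ℝ) ≤ 1 - 2*p := by linarith
        rw [hcard, card_insert_of_notMem hiS]
        calc (1 - 2*p)^(S.card + 1) * (Fintype.card (E → γ) : ℝ)
            = (1 - 2*p) * ((1 - 2*p)^S.card * (Fintype.card (E → γ) : ℝ)) := by ring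
          _ ≤ (1 - 2*p) * (NN A S).card := by
              apply mul_le_mul_of_nonneg_left ih h2p
          _ = (NN A S).card - 2*p*(NN A S).card := by ring
          _ ≤ (NN A S).card - (A i ∩ NN A S).card := by linarith
    have hfin : (0:ℝ) < (NN A (univ : Finset ι)).card := by
      have h1 : (0:ℝ) < (1 - 2*p)^(univ : Finset ι).card * (Fintype.card (E → γ) : ℝ) := by
        apply mul_pos (pow_pos (by linarith) _) hΩ
      linarith [pos (univ : Finset ι)]
    have : (NN A (univ : Finset ι)).Nonempty := by
      rw [← Finset.card_pos]
      exact_mod_cast hfin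
    obtain ⟨ω, hω⟩ := this
    exact ⟨ω, fun i => (mem_filter.1 hω).2 i (mem_univ _)⟩

end LLLAux

namespace BRL

set_option linter.unusedSectionVars false

open SimpleGraph
open scoped Classical

variable {α β : Type*} [Fintype α] [Fintype β]
  (H : SimpleGraph α) (G : SimpleGraph β) (n r t : ℕ)

/-- index type for configurations -/
abbrev Idx (α β : Type*) (n : ℕ) := (α → β) × (α → Finset (Fin n))

def Valid (k : Idx α β n) : Prop :=
  IsCopy H G k.1 ∧ ∀ u, (k.2 u).card = t

/-- set of "directed edges" of `H` -/
noncomputable def DE : Finset (α × α) := univ.filter (fun uv : α × α => H.Adj uv.1 uv.2)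

lemma card_DE : (DE H).card = 2 * H.edgeFinset.card := by
  have e1 : H.Dart ≃ {uv : α × α // H.Adj uv.1 uv.2} :=
    { toFun := fun d => ⟨d.toProd, d.adj⟩
      invFun := fun p => ⟨p.1, p.2⟩
      left_inv := fun d => by cases d; rfl
      right_inv := fun p => rfl }
  have h2 : (DE H).card = Fintype.card H.Dart := by
    rw [DE, ← Fintype.card_subtype, Fintype.card_congr e1]
  rw [h2, SimpleGraph.dart_card_eq_twice_card_edges]

/-- quadruples `((u,v),(a,b))` describing the edges of the canonical blowup copy `k` -/
noncomputable def Pq (k : Idx α β n) : Finset ((α × α) × Fin n × Fin n) :=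
  (DE H).biUnion (fun uv => ((k.2 uv.1) ×ˢ (k.2 uv.2)).image (fun ab => (uv, ab)))

lemma mem_Pq {k : Idx α β n} {q : (α × α) × Fin n × Fin n} :
    q ∈ Pq H n k ↔ H.Adj q.1.1 q.1.2 ∧ q.2.1 ∈ k.2 q.1.1 ∧ q.2.2 ∈ k.2 q.1.2 := by
  obtain ⟨⟨u, v⟩, ⟨a, b⟩⟩ := q
  simp only [Pq, mem_biUnion, mem_image, Finset.mem_product, DE, mem_filter, mem_univ,
    true_and]
  constructor
  · rintro ⟨⟨u', v'⟩, hadj, ⟨a', b'⟩, ⟨ha', hb'⟩, heq⟩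
    obtain ⟨h1, h2⟩ := Prod.mk.injEq _ _ _ _ ▸ heq
    obtain ⟨rfl, rfl⟩ := Prod.mk.injEq _ _ _ _ ▸ h1
    obtain ⟨rfl, rfl⟩ := Prod.mk.injEq _ _ _ _ ▸ h2
    exact ⟨hadj, ha', hb'⟩
  · rintro ⟨hadj, ha, hb⟩
    exact ⟨(u, v), hadj, (a, b), ⟨ha, hb⟩, rfl⟩

lemma card_Pq {k : Idx α β n} (hk : Valid H G n t k) :
    (Pq H n k).card = 2 * H.edgeFinset.card * t ^ 2 := by
  rw [Pq, card_biUnion]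
  · have : ∀ uv ∈ DE H,
        (((k.2 uv.1) ×ˢ (k.2 uv.2)).image (fun ab => (uv, ab))).card = t ^ 2 := by
      intro uv _
      rw [Finset.card_image_of_injective _ (fun a b hab => by
        simpa using (Prod.mk.injEq _ _ _ _ ▸ hab).2)]
      rw [Finset.card_product, hk.2, hk.2, sq]
    rw [Finset.sum_congr rfl this, Finset.sum_const, smul_eq_mul, card_DE]
  · intro uv _ uv' _ hne
    apply Finset.disjoint_left.2
    intro q hq hq'
    simp only [mem_image] at hq hq'
    obtain ⟨ab, _, rfl⟩ := hq
    obtain ⟨ab', _, heq⟩ := hq'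
    exact hne (Prod.ext_iff.1 heq).1.symm


/-- the `Sym2` edge corresponding to a quadruple -/
def fq (k : Idx α β n) (q : (α × α) × Fin n × Fin n) : Sym2 (β × Fin n) :=
  s((k.1 q.1.1, q.2.1), (k.1 q.1.2, q.2.2))

/-- the swap of a quadruple -/
def qsw (q : (α × α) × Fin n × Fin n) : (α × α) × Fin n × Fin n :=
  ((q.1.2, q.1.1), (q.2.2, q.2.1))

/-- the edge set of the canonical blowup copy `k` -/
noncomputable def Fset (k : Idx α β n) : Finset (Sym2 (β × Fin n)) :=
  (Pq H n k).image (fq n k)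

lemma fq_eq_cases {k : Idx α β n} (hinj : Function.Injective k.1)
    {q q' : (α × α) × Fin n × Fin n} (h : fq n k q = fq n k q') :
    q' = q ∨ q' = qsw n q := by
  obtain ⟨⟨u, v⟩, ⟨a, b⟩⟩ := q
  obtain ⟨⟨u', v'⟩, ⟨a', b'⟩⟩ := q'
  rw [fq, fq, Sym2.eq_iff] at h
  rcases h with ⟨h1, h2⟩ | ⟨h1, h2⟩
  · left
    obtain ⟨hu, ha⟩ := Prod.ext_iff.1 h1
    obtain ⟨hv, hb⟩ := Prod.ext_iff.1 h2
    have : u = u' := hinj hu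
    have : v = v' := hinj hv
    simp_all
  · right
    obtain ⟨hu, ha⟩ := Prod.ext_iff.1 h1
    obtain ⟨hv, hb⟩ := Prod.ext_iff.1 h2
    have : u = v' := hinj hu
    have : v = u' := hinj hv
    simp_all [qsw]

lemma card_Fset_upper {k : Idx α β n} (hk : Valid H G n t k) :
    (Fset H n k).card ≤ 2 * H.edgeFinset.card * t ^ 2 := by
  rw [← card_Pq H G n t hk]
  exact card_image_le

lemma card_Fset_lower {k : Idx α β n} (hk : Valid H G n t k) :
    H.edgeFinset.card * t ^ 2 ≤ (Fset H n k).card := by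
  have key : (Pq H n k).card ≤ 2 * (Fset H n k).card := by
    apply Finset.card_le_mul_card_image
    intro w hw
    obtain ⟨q0, hq0⟩ : ((Pq H n k).filter (fun q => fq n k q = w)).Nonempty := by
      rw [mem_image] at hw
      obtain ⟨q, hq, hfq⟩ := hw
      exact ⟨q, mem_filter.2 ⟨hq, hfq⟩⟩
    have hsub : (Pq H n k).filter (fun q => fq n k q = w) ⊆ {q0, qsw n q0} := by
      intro q hq
      rw [mem_filter] at hq hq0
      have := fq_eq_cases n hk.1.1 (hq0.2.trans hq.2.symm)
      rcases this with h | h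
      · exact Finset.mem_insert.2 (Or.inl h)
      · exact Finset.mem_insert.2 (Or.inr (by simp [h]))
    calc ((Pq H n k).filter (fun q => fq n k q = w)).card ≤ _ := card_le_card hsub
      _ ≤ 2 := by
          apply le_trans (card_insert_le _ _)
          simp
  have key2 : 2 * (H.edgeFinset.card * t ^ 2) ≤ 2 * (Fset H n k).card := by
    calc 2 * (H.edgeFinset.card * t ^ 2) = 2 * H.edgeFinset.card * t ^ 2 := by ring
      _ = (Pq H n k).card := (card_Pq H G n t hk).symm
      _ ≤ 2 * (Fset H n k).card := key
  omega


/-- the bad event for configuration `k` : colourings making the canonical copy `k` mono -/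
noncomputable def Aev (k : Idx α β n) : Finset (Sym2 (β × Fin n) → Fin r) :=
  if Valid H G n t k then
    univ.filter (fun c => ∃ i : Fin r, ∀ e ∈ Fset H n k, c e = i)
  else ∅

/-- dependency edge-sets -/
noncomputable def Fam (k : Idx α β n) : Finset (Sym2 (β × Fin n)) :=
  if Valid H G n t k then Fset H n k else ∅

lemma Aev_det (k : Idx α β n) :
    LLLAux.DeterminedBy (Aev H G n r t k) (Fam H G n t k) := by
  intro ω ω' hagree hω
  rw [Aev, Fam] at *
  by_cases hk : Valid H G n t k
  · rw [if_pos hk] at *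
    rw [mem_filter] at hω ⊢
    obtain ⟨-, i, hi⟩ := hω
    exact ⟨mem_univ _, i, fun e he => (hagree e he).symm.trans (hi e he)⟩
  · rw [if_neg hk] at hω
    simp at hω

lemma Aev_card {k : Idx α β n} (hr : 1 ≤ r) (hk : Valid H G n t k) :
    (Aev H G n r t k).card * r ^ (H.edgeFinset.card * t ^ 2)
      ≤ r ^ (Fintype.card (Sym2 (β × Fin n)) + 1) := by
  have hsub : Aev H G n r t k ⊆
      (univ : Finset (Fin r)).biUnion
        (fun i => univ.filter (fun c : Sym2 (β × Fin n) → Fin r =>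
          ∀ e ∈ Fset H n k, c e = i)) := by
    rw [Aev, if_pos hk]
    intro c hc
    obtain ⟨-, i, hi⟩ := mem_filter.1 hc
    exact mem_biUnion.2 ⟨i, mem_univ _, mem_filter.2 ⟨mem_univ _, hi⟩⟩
  have h1 : (Aev H G n r t k).card
      ≤ r * r ^ (Fintype.card (Sym2 (β × Fin n)) - (Fset H n k).card) := by
    calc (Aev H G n r t k).card ≤ _ := card_le_card hsub
      _ ≤ ∑ i : Fin r, (univ.filter (fun c : Sym2 (β × Fin n) → Fin r =>
          ∀ e ∈ Fset H n k, c e = i)).card := card_biUnion_le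
      _ = r * r ^ (Fintype.card (Sym2 (β × Fin n)) - (Fset H n k).card) := by
          rw [Finset.sum_congr rfl (fun i _ => LLLAux.card_filter_const (Fset H n k) i)]
          simp [Fintype.card_fin, mul_comm]
  have hFle : (Fset H n k).card ≤ Fintype.card (Sym2 (β × Fin n)) := by
    calc (Fset H n k).card ≤ (univ : Finset (Sym2 (β × Fin n))).card :=
          card_le_card (subset_univ _)
      _ = _ := card_univ
  have hmt : H.edgeFinset.card * t ^ 2 ≤ (Fset H n k).card := card_Fset_lower H G n t hk
  calc (Aev H G n r t k).card * r ^ (H.edgeFinset.card * t ^ 2)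
      ≤ (r * r ^ (Fintype.card (Sym2 (β × Fin n)) - (Fset H n k).card))
          * r ^ (H.edgeFinset.card * t ^ 2) :=
        Nat.mul_le_mul_right _ h1
    _ = r ^ (Fintype.card (Sym2 (β × Fin n)) - (Fset H n k).card
          + H.edgeFinset.card * t ^ 2 + 1) := by ring
    _ ≤ r ^ (Fintype.card (Sym2 (β × Fin n)) + 1) := by
        apply Nat.pow_le_pow_right hr
        omega


lemma card_sets_mem (a : Fin n) :
    (univ.filter fun s : Finset (Fin n) => s.card = t ∧ a ∈ s).card
      ≤ (n - 1).choose (t - 1) := by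
  have h1 : (Finset.powersetCard (t - 1) ((univ : Finset (Fin n)).erase a)).card
      = (n - 1).choose (t - 1) := by
    rw [Finset.card_powersetCard, card_erase_of_mem (mem_univ _), card_univ,
      Fintype.card_fin]
  rw [← h1]
  apply Finset.card_le_card_of_injOn (fun s => s.erase a)
  · intro s hs
    rw [mem_coe, mem_filter] at hs
    obtain ⟨-, hcard, hmem⟩ := hs
    rw [mem_coe, Finset.mem_powersetCard]
    exact ⟨Finset.erase_subset_erase a (subset_univ s),
      by rw [card_erase_of_mem hmem, hcard]⟩
  · intro s1 h1 s2 h2 heq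
    rw [coe_filter] at h1 h2
    obtain ⟨-, -, hm1⟩ := h1
    obtain ⟨-, -, hm2⟩ := h2
    rw [← Finset.insert_erase hm1, ← Finset.insert_erase hm2]
    exact congrArg _ heq

lemma card_sets_all :
    (univ.filter fun s : Finset (Fin n) => s.card = t).card = n.choose t := by
  have : (univ.filter fun s : Finset (Fin n) => s.card = t)
      = (univ : Finset (Fin n)).powersetCard t := by
    rw [Finset.powersetCard_eq_filter, Finset.powerset_univ]
  rw [this, Finset.card_powersetCard, card_univ, Fintype.card_fin]

/-- bound on the number of configurations whose edge set contains a fixed edge -/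
lemma count_through (w : Sym2 (β × Fin n)) :
    (univ.filter fun j : Idx α β n => w ∈ Fam H G n t j).card
      ≤ (2 * H.edgeFinset.card) * ((Fintype.card β ^ Fintype.card α)
          * (((n - 1).choose (t - 1)) ^ 2
            * (n.choose t) ^ (Fintype.card α - 2))) := by
  induction w using Sym2.ind with
  | _ z1 z2 =>
  set Q1 : ℕ := (Fintype.card β ^ Fintype.card α)
          * (((n - 1).choose (t - 1)) ^ 2 * (n.choose t) ^ (Fintype.card α - 2)) with hQ1
  set Tset : α × α → Finset (Idx α β n) := fun uv =>
    univ.filter (fun j : Idx α β n =>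
      z1.2 ∈ j.2 uv.1 ∧ z2.2 ∈ j.2 uv.2 ∧ ∀ u, (j.2 u).card = t) with hTset
  have hsub : (univ.filter fun j : Idx α β n => s(z1, z2) ∈ Fam H G n t j)
      ⊆ (DE H).biUnion Tset := by
    intro j hj
    rw [mem_filter, Fam] at hj
    obtain ⟨-, hj⟩ := hj
    by_cases hv : Valid H G n t j
    swap
    · rw [if_neg hv] at hj; simp at hj
    rw [if_pos hv, Fset, mem_image] at hj
    obtain ⟨q, hq, hfq⟩ := hj
    obtain ⟨⟨u, v⟩, ⟨a, b⟩⟩ := q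
    rw [mem_Pq] at hq
    obtain ⟨hadj, ha, hb⟩ := hq
    rw [fq, Sym2.eq_iff] at hfq
    rw [mem_biUnion]
    rcases hfq with ⟨h1, h2⟩ | ⟨h1, h2⟩
    · refine ⟨(u, v), ?_, ?_⟩
      · rw [DE, mem_filter]; exact ⟨mem_univ _, hadj⟩
      · rw [hTset, mem_filter]
        refine ⟨mem_univ _, ?_, ?_, hv.2⟩
        · have := (Prod.ext_iff.1 h1).2; simp only at this; rw [this] at ha; exact ha
        · have := (Prod.ext_iff.1 h2).2; simp only at this; rw [this] at hb; exact hb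
    · refine ⟨(v, u), ?_, ?_⟩
      · rw [DE, mem_filter]; exact ⟨mem_univ _, hadj.symm⟩
      · rw [hTset, mem_filter]
        refine ⟨mem_univ _, ?_, ?_, hv.2⟩
        · have := (Prod.ext_iff.1 h2).2; simp only at this; rw [this] at hb; exact hb
        · have := (Prod.ext_iff.1 h1).2; simp only at this; rw [this] at ha; exact ha
  have hTbound : ∀ uv ∈ DE H, (Tset uv).card ≤ Q1 := by
    intro uv huv
    have hne : uv.1 ≠ uv.2 := by
      rw [DE, mem_filter] at huv
      exact huv.2.ne
    have hprod : Tset uv = (univ : Finset (α → β)) ×ˢ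
        (univ.filter (fun S : α → Finset (Fin n) =>
          z1.2 ∈ S uv.1 ∧ z2.2 ∈ S uv.2 ∧ ∀ u, (S u).card = t)) := by
      ext j
      simp [hTset, Finset.mem_product]
    have hpi : (univ.filter (fun S : α → Finset (Fin n) =>
          z1.2 ∈ S uv.1 ∧ z2.2 ∈ S uv.2 ∧ ∀ u, (S u).card = t))
        = Fintype.piFinset (fun u' : α => univ.filter
            (fun s : Finset (Fin n) => s.card = t ∧ (u' = uv.1 → z1.2 ∈ s)
              ∧ (u' = uv.2 → z2.2 ∈ s))) := by
      ext S
      rw [mem_filter, Fintype.mem_piFinset]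
      constructor
      · rintro ⟨-, h1, h2, h3⟩ u'
        rw [mem_filter]
        refine ⟨mem_univ _, h3 u', fun he => he ▸ h1, fun he => he ▸ h2⟩
      · intro h
        refine ⟨mem_univ _, ((mem_filter.1 (h uv.1)).2).2.1 rfl,
          ((mem_filter.1 (h uv.2)).2).2.2 rfl, fun u => ((mem_filter.1 (h u)).2).1⟩
    set c : α → ℕ := fun u' => (univ.filter
        (fun s : Finset (Fin n) => s.card = t ∧ (u' = uv.1 → z1.2 ∈ s)
          ∧ (u' = uv.2 → z2.2 ∈ s))).card with hc
    have hcard : (Tset uv).card = (Fintype.card β ^ Fintype.card α) * ∏ u', c u' := by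
      rw [hprod, Finset.card_product, hpi, Fintype.card_piFinset, card_univ,
        Fintype.card_fun]
    have hcu : c uv.1 ≤ (n - 1).choose (t - 1) := by
      refine le_trans (card_le_card ?_) (card_sets_mem n t z1.2)
      intro s hs
      rw [mem_filter] at hs ⊢
      exact ⟨mem_univ _, hs.2.1, hs.2.2.1 rfl⟩
    have hcv : c uv.2 ≤ (n - 1).choose (t - 1) := by
      refine le_trans (card_le_card ?_) (card_sets_mem n t z2.2)
      intro s hs
      rw [mem_filter] at hs ⊢
      exact ⟨mem_univ _, hs.2.1, hs.2.2.2 rfl⟩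
    have hcall : ∀ u', c u' ≤ n.choose t := by
      intro u'
      rw [hc, ← card_sets_all n t]
      apply card_le_card
      intro s hs
      rw [mem_filter] at hs ⊢
      exact ⟨mem_univ _, hs.2.1⟩
    have hv2 : uv.2 ∈ (univ : Finset α).erase uv.1 :=
      Finset.mem_erase.2 ⟨hne.symm, mem_univ _⟩
    have hprodsplit : ∏ u', c u' = c uv.1 * (c uv.2 * ∏ u' ∈ ((univ : Finset α).erase uv.1).erase uv.2, c u') := by
      rw [Finset.mul_prod_erase _ c hv2, Finset.mul_prod_erase _ c (mem_univ uv.1)]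
    have hrest : ∏ u' ∈ ((univ : Finset α).erase uv.1).erase uv.2, c u'
        ≤ (n.choose t) ^ (Fintype.card α - 2) := by
      have := Finset.prod_le_pow_card (((univ : Finset α).erase uv.1).erase uv.2) c
        (n.choose t) (fun u' _ => hcall u')
      have hcard2 : (((univ : Finset α).erase uv.1).erase uv.2).card
          = Fintype.card α - 2 := by
        rw [card_erase_of_mem hv2, card_erase_of_mem (mem_univ _), card_univ]
        omega
      rwa [hcard2] at this
    calc (Tset uv).card = (Fintype.card β ^ Fintype.card α) * ∏ u', c u' := hcard
      _ ≤ Q1 := by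
          rw [hQ1, hprodsplit]
          apply Nat.mul_le_mul_left
          calc c uv.1 * (c uv.2 * ∏ u' ∈ ((univ : Finset α).erase uv.1).erase uv.2, c u')
              ≤ (n-1).choose (t-1) * ((n-1).choose (t-1) * (n.choose t) ^ (Fintype.card α - 2)) := by
                exact Nat.mul_le_mul hcu (Nat.mul_le_mul hcv hrest)
            _ = ((n - 1).choose (t - 1)) ^ 2 * (n.choose t) ^ (Fintype.card α - 2) := by ring
  calc (univ.filter fun j : Idx α β n => s(z1, z2) ∈ Fam H G n t j).card
      ≤ ((DE H).biUnion Tset).card := card_le_card hsub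
    _ ≤ ∑ uv ∈ DE H, (Tset uv).card := card_biUnion_le
    _ ≤ (DE H).card * Q1 := by
        have := Finset.sum_le_card_nsmul (DE H) (fun uv => (Tset uv).card) Q1 hTbound
        simpa [smul_eq_mul] using this
    _ = (2 * H.edgeFinset.card) * Q1 := by rw [card_DE]

/-- the dependency-degree bound -/
lemma neighbor_bound (k : Idx α β n) :
    (univ.filter fun j : Idx α β n =>
        (Fam H G n t j ∩ Fam H G n t k).Nonempty).card
      ≤ (2 * H.edgeFinset.card * t ^ 2) * ((2 * H.edgeFinset.card)
          * ((Fintype.card β ^ Fintype.card α)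
          * (((n - 1).choose (t - 1)) ^ 2
            * (n.choose t) ^ (Fintype.card α - 2)))) := by
  set Q2 : ℕ := (2 * H.edgeFinset.card) * ((Fintype.card β ^ Fintype.card α)
          * (((n - 1).choose (t - 1)) ^ 2 * (n.choose t) ^ (Fintype.card α - 2)))
  have hsub : (univ.filter fun j : Idx α β n =>
      (Fam H G n t j ∩ Fam H G n t k).Nonempty)
      ⊆ (Fam H G n t k).biUnion (fun w => univ.filter
          (fun j : Idx α β n => w ∈ Fam H G n t j)) := by
    intro j hj
    obtain ⟨w, hw⟩ := (mem_filter.1 hj).2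
    rw [mem_inter] at hw
    exact mem_biUnion.2 ⟨w, hw.2, mem_filter.2 ⟨mem_univ _, hw.1⟩⟩
  have hFamcard : (Fam H G n t k).card ≤ 2 * H.edgeFinset.card * t ^ 2 := by
    rw [Fam]
    by_cases hv : Valid H G n t k
    · rw [if_pos hv]; exact card_Fset_upper H G n t hv
    · rw [if_neg hv]; simp
  calc (univ.filter fun j : Idx α β n =>
      (Fam H G n t j ∩ Fam H G n t k).Nonempty).card
      ≤ ((Fam H G n t k).biUnion (fun w => univ.filter
          (fun j : Idx α β n => w ∈ Fam H G n t j))).card := card_le_card hsub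
    _ ≤ ∑ w ∈ Fam H G n t k, (univ.filter
          (fun j : Idx α β n => w ∈ Fam H G n t j)).card := card_biUnion_le
    _ ≤ (Fam H G n t k).card * Q2 := by
        have := Finset.sum_le_card_nsmul (Fam H G n t k)
          (fun w => (univ.filter (fun j : Idx α β n => w ∈ Fam H G n t j)).card) Q2
          (fun w _ => count_through H G n t w)
        simpa [smul_eq_mul] using this
    _ ≤ (2 * H.edgeFinset.card * t ^ 2) * Q2 := Nat.mul_le_mul_right _ hFamcard


/-- LLL applied: if the numeric conditions hold, there is a colouring with no
monochromatic canonical blowup copy. -/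
lemma no_mono (hr : 2 ≤ r)
    (hp4 : (r : ℝ) * (((r : ℝ) ^ (H.edgeFinset.card * t ^ 2)))⁻¹ ≤ 1/4)
    (hpD : (r : ℝ) * (((r : ℝ) ^ (H.edgeFinset.card * t ^ 2)))⁻¹
        * ((2 * H.edgeFinset.card * t ^ 2) * ((2 * H.edgeFinset.card)
          * ((Fintype.card β ^ Fintype.card α)
          * (((n - 1).choose (t - 1)) ^ 2
            * (n.choose t) ^ (Fintype.card α - 2)))) : ℕ) ≤ 1/4) :
    ∃ c : Sym2 (β × Fin n) → Fin r, ¬ MonoCanonBlowup H G n r (fun _ => t) c := by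
  have hrpos : (0:ℝ) < r := by positivity
  have hppos : (0:ℝ) < (r : ℝ) * (((r : ℝ) ^ (H.edgeFinset.card * t ^ 2)))⁻¹ := by
    positivity
  haveI : Nonempty (Fin r) := ⟨⟨0, by omega⟩⟩
  set p : ℝ := (r : ℝ) * (((r : ℝ) ^ (H.edgeFinset.card * t ^ 2)))⁻¹ with hp
  set D : ℕ := (2 * H.edgeFinset.card * t ^ 2) * ((2 * H.edgeFinset.card)
          * ((Fintype.card β ^ Fintype.card α)
          * (((n - 1).choose (t - 1)) ^ 2
            * (n.choose t) ^ (Fintype.card α - 2)))) with hD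
  have hcardfun : (Fintype.card (Sym2 (β × Fin n) → Fin r) : ℝ)
      = (r : ℝ) ^ (Fintype.card (Sym2 (β × Fin n))) := by
    rw [Fintype.card_fun, Fintype.card_fin]
    push_cast
    rfl
  have hp_bound : ∀ k : Idx α β n, ((Aev H G n r t k).card : ℝ)
      ≤ p * Fintype.card (Sym2 (β × Fin n) → Fin r) := by
    intro k
    by_cases hk : Valid H G n t k
    · have h1 := Aev_card H G n r t (by omega) hk
      have h2 : ((Aev H G n r t k).card : ℝ) * (r : ℝ) ^ (H.edgeFinset.card * t ^ 2)
          ≤ (r : ℝ) ^ (Fintype.card (Sym2 (β × Fin n)) + 1) := by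
        exact_mod_cast h1
      rw [hcardfun, hp]
      rw [← mul_le_mul_iff_of_pos_right (show (0:ℝ) < (r : ℝ) ^ (H.edgeFinset.card * t ^ 2) by
        positivity)]
      calc ((Aev H G n r t k).card : ℝ) * (r : ℝ) ^ (H.edgeFinset.card * t ^ 2)
          ≤ (r : ℝ) ^ (Fintype.card (Sym2 (β × Fin n)) + 1) := h2
        _ = (r : ℝ) * ((r : ℝ) ^ (H.edgeFinset.card * t ^ 2))⁻¹
            * (r : ℝ) ^ (Fintype.card (Sym2 (β × Fin n)))
            * (r : ℝ) ^ (H.edgeFinset.card * t ^ 2) := by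
            field_simp
            ring
    · rw [Aev, if_neg hk]
      simp only [Finset.card_empty, Nat.cast_zero]
      positivity
  have hDb : ∀ k : Idx α β n,
      ((univ.filter fun j => ((Fam H G n t j) ∩ (Fam H G n t k)).Nonempty).card
        ≤ D + 1) := by
    intro k
    exact le_trans (neighbor_bound H G n t k) (Nat.le_succ _)
  obtain ⟨c, hc⟩ := LLLAux.lll_exists (Aev H G n r t) (Fam H G n t)
    (Aev_det H G n r t) hp_bound D hDb hp4 hpD
  refine ⟨c, fun hmcb => ?_⟩
  obtain ⟨φ, S, i, hcopy, hcards, hmono⟩ := hmcb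
  have hval : Valid H G n t (φ, S) := ⟨hcopy, hcards⟩
  apply hc (φ, S)
  rw [Aev, if_pos hval, mem_filter]
  refine ⟨mem_univ _, i, fun e he => ?_⟩
  rw [Fset, mem_image] at he
  obtain ⟨q, hq, rfl⟩ := he
  rw [mem_Pq] at hq
  exact hmono hq.1 _ hq.2.1 _ hq.2.2

end BRL

set_option maxHeartbeats 1000000 in
/-- Theorem 3.1: lower bound for the blowup Ramsey numbers:
`B_r(G,H;t) ≥ (1+o(1))·(r^{d(H)/v(H)}/e)·t·r^{d(H)t/2}` as `t → ∞`, phrased as: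
for every `ε > 0` there is `T` such that for `t ≥ T`, any `n` for which `G[n]`
is canonically `r`-Ramsey for `H[t]` satisfies the corresponding bound. -/
theorem blowup_ramsey_lower_bound [Fintype α] [Fintype β] [Nonempty α]
    (r : ℕ) (hr : 2 ≤ r) (H : SimpleGraph α) (G : SimpleGraph β) :
    ∀ ε : ℝ, 0 < ε → ∃ T : ℕ, ∀ t : ℕ, T ≤ t → ∀ n : ℕ,
      (∀ c : Sym2 (β × Fin n) → Fin r, MonoCanonBlowup H G n r (fun _ => t) c) →
      (1 - ε) *
        ((r : ℝ) ^ ((2 * (Nat.card H.edgeSet : ℝ) / (Fintype.card α : ℝ)) /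
            (Fintype.card α : ℝ)) / Real.exp 1) *
        (t : ℝ) *
        (r : ℝ) ^ (2 * (Nat.card H.edgeSet : ℝ) / (Fintype.card α : ℝ) * (t : ℝ) / 2)
      ≤ (n : ℝ) := by
  classical
  intro ε hε
  set V : ℕ := Fintype.card α with hVdef
  set m : ℕ := H.edgeFinset.card with hmdef
  set B : ℕ := Fintype.card β with hBdef
  have hm_eq : (Nat.card H.edgeSet) = m := by
    rw [Nat.card_eq_fintype_card, ← SimpleGraph.edgeFinset_card, hmdef]
  have hV1 : 1 ≤ V := by
    rw [hVdef]
    exact Fintype.card_pos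
  have hVm : m = 0 ∨ 2 ≤ V := by
    by_cases hm0 : m = 0
    · exact Or.inl hm0
    · refine Or.inr ?_
      have hpos : 0 < H.edgeFinset.card := by rw [← hmdef]; omega
      obtain ⟨e, he⟩ := Finset.card_pos.1 hpos
      rw [SimpleGraph.mem_edgeFinset] at he
      rw [hVdef]
      induction e using Sym2.ind with
      | _ u v =>
        rw [SimpleGraph.mem_edgeSet] at he
        have : Nontrivial α := ⟨u, v, he.ne⟩
        exact Fintype.one_lt_card
  clear_value V m B
  obtain ⟨K, hKdef⟩ : ∃ x : ℝ, x = 4*(m:ℝ)^2*(B:ℝ)^V*(r:ℝ)*Real.exp 1^2 := ⟨_, rfl⟩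
  have hK0 : 0 ≤ K := by rw [hKdef]; positivity
  set g : ℝ := max (1-ε) 0 with hgdef
  have hg0 : 0 ≤ g := le_max_right _ _
  have hg1 : g < 1 := max_lt (by linarith) one_pos
  have hgle : 1 - ε ≤ g := le_max_left _ _
  clear_value g
  obtain ⟨T₀, hT₀⟩ := eventually_small K g hg0 hg1
  refine ⟨max T₀ 2, ?_⟩
  intro t ht n hRam
  have ht2 : 2 ≤ t := le_trans (le_max_right _ _) ht
  have htT0 : T₀ ≤ t := le_trans (le_max_left _ _) ht
  have hrpos : (0:ℝ) < r := by positivity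
  have hr1 : (1:ℝ) ≤ r := by exact_mod_cast Nat.one_le_of_lt hr
  obtain ⟨φ₀, S₀, i₀, hcopy₀, hcards₀, -⟩ := hRam (fun _ => ⟨0, by omega⟩)
  have htn : t ≤ n := by
    obtain ⟨u⟩ := (inferInstance : Nonempty α)
    calc t = (S₀ u).card := (hcards₀ u).symm
      _ ≤ (univ : Finset (Fin n)).card := card_le_card (subset_univ _)
      _ = n := by rw [card_univ, Fintype.card_fin]
  have ht0 : (0:ℝ) < (t:ℝ) := by
    have : 0 < t := by omega
    exact_mod_cast this
  rw [hm_eq]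
  by_cases hm0 : m = 0
  · -- H has no edges: the bound is trivial
    rw [hm0]
    simp only [Nat.cast_zero, mul_zero, zero_mul, zero_div, Real.rpow_zero]
    have h1 : (1:ℝ) ≤ Real.exp 1 := Real.one_le_exp (by norm_num)
    have htn' : (t:ℝ) ≤ n := by exact_mod_cast htn
    have hepos : (0:ℝ) < Real.exp 1 := Real.exp_pos 1
    rcases le_or_gt (1-ε) 0 with hle | hlt
    · have hx : (0:ℝ) ≤ (1/Real.exp 1) * t := by positivity
      have h2 : (1-ε) * ((1/Real.exp 1) * t) ≤ 0 :=
        mul_nonpos_of_nonpos_of_nonneg hle hx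
      have h2' : (1-ε) * (1/Real.exp 1) * t * 1 ≤ 0 := by
        calc (1-ε) * (1/Real.exp 1) * t * 1 = (1-ε) * ((1/Real.exp 1) * t) := by ring
          _ ≤ 0 := h2
      have := Nat.cast_nonneg (α := ℝ) n
      linarith
    · have h3 : 1/Real.exp 1 ≤ 1 := by
        rw [div_le_one hepos]; exact h1
      have h4 : (1-ε) * (1/Real.exp 1) ≤ 1 := by nlinarith
      have h5 := mul_le_mul_of_nonneg_right h4 ht0.le
      calc (1-ε) * (1/Real.exp 1) * (t:ℝ) * 1 = (1-ε) * (1/Real.exp 1) * (t:ℝ) := by ring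
        _ ≤ 1 * t := h5
        _ ≤ (n:ℝ) := by linarith
  · have hm1 : 1 ≤ m := by omega
    have hV2 : 2 ≤ V := by rcases hVm with h | h <;> omega
    by_contra hcon
    push_neg at hcon
    have hn0 : (0:ℝ) ≤ (n:ℝ) := Nat.cast_nonneg n
    have hε1 : 0 < 1 - ε := by
      by_contra hle
      push_neg at hle
      have hA : (0:ℝ) < (r : ℝ) ^ ((2 * (m:ℝ) / (V:ℝ)) / (V:ℝ)) / Real.exp 1 := by
        apply div_pos (Real.rpow_pos_of_pos hrpos _) (Real.exp_pos 1)
      have hC : (0:ℝ) < (r : ℝ) ^ (2 * (m:ℝ) / (V:ℝ) * (t:ℝ) / 2) :=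
        Real.rpow_pos_of_pos hrpos _
      have hprod : (1 - ε) * ((r : ℝ) ^ ((2 * (m:ℝ) / (V:ℝ)) / (V:ℝ)) / Real.exp 1)
          * (t:ℝ) * (r : ℝ) ^ (2 * (m:ℝ) / (V:ℝ) * (t:ℝ) / 2) ≤ 0 := by
        have hx : (0:ℝ) ≤ ((r : ℝ) ^ ((2 * (m:ℝ) / (V:ℝ)) / (V:ℝ)) / Real.exp 1)
            * (t:ℝ) * (r : ℝ) ^ (2 * (m:ℝ) / (V:ℝ) * (t:ℝ) / 2) := by positivity
        calc (1 - ε) * ((r : ℝ) ^ ((2 * (m:ℝ) / (V:ℝ)) / (V:ℝ)) / Real.exp 1)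
              * (t:ℝ) * (r : ℝ) ^ (2 * (m:ℝ) / (V:ℝ) * (t:ℝ) / 2)
            = (1 - ε) * (((r : ℝ) ^ ((2 * (m:ℝ) / (V:ℝ)) / (V:ℝ)) / Real.exp 1)
              * (t:ℝ) * (r : ℝ) ^ (2 * (m:ℝ) / (V:ℝ) * (t:ℝ) / 2)) := by ring
          _ ≤ 0 := mul_nonpos_of_nonpos_of_nonneg hle hx
      linarith
    have hXle : (n:ℝ) ≤ (1 - ε) * ((r:ℝ) ^ ((2*(m:ℝ)/(V:ℝ))/(V:ℝ)) / Real.exp 1) * (t:ℝ)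
        * (r:ℝ) ^ ((2*(m:ℝ)/(V:ℝ)) * (t:ℝ)/2) := le_of_lt hcon
    -- main numeric inequality
    have hkey := numeric m V t (r:ℝ) (n:ℝ) ε hm1 hV2 ht2 hr1 hn0 hε1 hXle
    obtain ⟨N, hN⟩ : ∃ x : ℕ, x = n.choose t := ⟨_, rfl⟩
    obtain ⟨N', hN'⟩ : ∃ x : ℕ, x = (n-1).choose (t-1) := ⟨_, rfl⟩
    have hid : (n:ℝ) * (N':ℝ) = (N:ℝ) * (t:ℝ) := by
      have hnat : n * ((n-1).choose (t-1)) = n.choose t * t := by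
        have h := Nat.add_one_mul_choose_eq (n-1) (t-1)
        rw [show n-1+1 = n from by omega, show t-1+1 = t from by omega] at h
        exact h
      rw [hN, hN']
      exact_mod_cast hnat
    have hchoose : (N:ℝ) ≤ (n:ℝ)^t * (Real.exp 1 ^ t / (t:ℝ)^t) := by
      rw [hN]; exact choose_le_real n t (by omega)
    obtain ⟨kk, hkk⟩ : ∃ kk, V = kk + 2 := ⟨V-2, by omega⟩
    have hVk : V - 2 = kk := by omega
    have hsq : (N':ℝ)^2 * (n:ℝ)^2 = (t:ℝ)^2 * (N:ℝ)^2 := by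
      linear_combination ((n:ℝ) * (N':ℝ) + (N:ℝ) * (t:ℝ)) * hid
    obtain ⟨D, hDdef⟩ : ∃ x : ℕ, x = 2 * m * t ^ 2 * (2 * m * (B ^ V
        * (N' ^ 2 * N ^ (V - 2)))) := ⟨_, rfl⟩
    have hDn : (D:ℝ) * (n:ℝ)^2 = 4*(m:ℝ)^2 * (t:ℝ)^4 * (B:ℝ)^V * (N:ℝ)^V := by
      rw [hDdef, hVk, hkk]
      push_cast
      linear_combination (4*(m:ℝ)^2*(t:ℝ)^2*(B:ℝ)^kk*(B:ℝ)^2*(N:ℝ)^kk) * hsq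
    have hn2 : (0:ℝ) < (n:ℝ)^2 := by
      have : 0 < n := by omega
      positivity
    have hrmt : (0:ℝ) < ((r:ℝ))^(m*t^2) := by positivity
    obtain ⟨p, hpdef⟩ : ∃ x : ℝ, x = (r:ℝ) * (((r:ℝ) ^ (m * t ^ 2)))⁻¹ := ⟨_, rfl⟩
    have hp4 : p ≤ 1/4 := by
      have h4 : (4:ℝ) * r ≤ (r:ℝ)^(m*t^2) := by
        have hr2 : (2:ℝ) ≤ r := by exact_mod_cast hr
        have e1 : (r:ℝ)^4 ≤ (r:ℝ)^(m*t^2) := by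
          apply pow_le_pow_right₀ (by linarith)
          nlinarith
        have hrr : (2:ℝ)^3 ≤ (r:ℝ)^3 := pow_le_pow_left₀ (by norm_num) hr2 3
        have h5 : (8:ℝ) * r ≤ (r:ℝ)^3 * r := by
          apply mul_le_mul_of_nonneg_right _ hrpos.le
          norm_num at hrr ⊢
          linarith
        have h6 : (r:ℝ)^3 * (r:ℝ) = (r:ℝ)^4 := by ring
        linarith
      rw [hpdef, mul_inv_le_iff₀ hrmt]
      linarith
    have hNnn : (0:ℝ) ≤ (N:ℝ) := Nat.cast_nonneg _
    have hNV_le : (N:ℝ)^V ≤ (n:ℝ)^(t*V) * (Real.exp 1 ^ t / (t:ℝ)^t)^V := by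
      calc (N:ℝ)^V ≤ ((n:ℝ)^t * (Real.exp 1 ^ t / (t:ℝ)^t))^V :=
            pow_le_pow_left₀ hNnn hchoose V
        _ = _ := by rw [mul_pow, ← pow_mul]
    have hnsplit : (n:ℝ)^(t*V) = (n:ℝ)^2 * (n:ℝ)^(t*V-2) := by
      rw [← pow_add]
      congr 1
      have : 2 + 2 ≤ t * V := Nat.mul_le_mul ht2 hV2
      omega
    have hpD : p * (D:ℝ) ≤ 1/4 := by
      have hfrac : p * (D:ℝ) * (n:ℝ)^2
          = (4*(m:ℝ)^2*(B:ℝ)^V*(r:ℝ)) * ((N:ℝ)^V * (t:ℝ)^4 * (((r:ℝ))^(m*t^2))⁻¹) := by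
        rw [hpdef]
        linear_combination ((r:ℝ) * (((r:ℝ))^(m*t^2))⁻¹) * hDn
      have hstep : p * (D:ℝ) * (n:ℝ)^2 ≤
          (4*(m:ℝ)^2*(B:ℝ)^V*(r:ℝ)) * ((n:ℝ)^(t*V-2) * (Real.exp 1 ^ t / (t:ℝ)^t)^V
            * (t:ℝ)^4 * (((r:ℝ))^(m*t^2))⁻¹) * (n:ℝ)^2 := by
        rw [hfrac]
        have hb : (N:ℝ)^V * (t:ℝ)^4 * (((r:ℝ))^(m*t^2))⁻¹
            ≤ ((n:ℝ)^2 * (n:ℝ)^(t*V-2)) * (Real.exp 1 ^ t / (t:ℝ)^t)^V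
              * (t:ℝ)^4 * (((r:ℝ))^(m*t^2))⁻¹ := by
          have hpos : (0:ℝ) ≤ (t:ℝ)^4 * (((r:ℝ))^(m*t^2))⁻¹ := by positivity
          calc (N:ℝ)^V * (t:ℝ)^4 * (((r:ℝ))^(m*t^2))⁻¹
              = (N:ℝ)^V * ((t:ℝ)^4 * (((r:ℝ))^(m*t^2))⁻¹) := by ring
            _ ≤ ((n:ℝ)^2 * (n:ℝ)^(t*V-2) * (Real.exp 1 ^ t / (t:ℝ)^t)^V)
                  * ((t:ℝ)^4 * (((r:ℝ))^(m*t^2))⁻¹) := by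
                apply mul_le_mul_of_nonneg_right _ hpos
                calc (N:ℝ)^V ≤ (n:ℝ)^(t*V) * (Real.exp 1 ^ t / (t:ℝ)^t)^V := hNV_le
                  _ = (n:ℝ)^2 * (n:ℝ)^(t*V-2) * (Real.exp 1 ^ t / (t:ℝ)^t)^V := by
                      rw [hnsplit]
            _ = ((n:ℝ)^2 * (n:ℝ)^(t*V-2)) * (Real.exp 1 ^ t / (t:ℝ)^t)^V
                  * (t:ℝ)^4 * (((r:ℝ))^(m*t^2))⁻¹ := by ring
        have hKpos : (0:ℝ) ≤ 4*(m:ℝ)^2*(B:ℝ)^V*(r:ℝ) := by positivity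
        calc (4*(m:ℝ)^2*(B:ℝ)^V*(r:ℝ)) * ((N:ℝ)^V * (t:ℝ)^4 * (((r:ℝ))^(m*t^2))⁻¹)
            ≤ (4*(m:ℝ)^2*(B:ℝ)^V*(r:ℝ)) * (((n:ℝ)^2 * (n:ℝ)^(t*V-2))
                * (Real.exp 1 ^ t / (t:ℝ)^t)^V * (t:ℝ)^4 * (((r:ℝ))^(m*t^2))⁻¹) :=
              mul_le_mul_of_nonneg_left hb hKpos
          _ = (4*(m:ℝ)^2*(B:ℝ)^V*(r:ℝ)) * ((n:ℝ)^(t*V-2)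
                * (Real.exp 1 ^ t / (t:ℝ)^t)^V * (t:ℝ)^4 * (((r:ℝ))^(m*t^2))⁻¹)
                * (n:ℝ)^2 := by ring
      have h6 : p * (D:ℝ) ≤ (4*(m:ℝ)^2*(B:ℝ)^V*(r:ℝ))
          * ((n:ℝ)^(t*V-2) * (Real.exp 1 ^ t / (t:ℝ)^t)^V
            * (t:ℝ)^4 * (((r:ℝ))^(m*t^2))⁻¹) :=
        (mul_le_mul_iff_of_pos_right hn2).1 hstep
      have h8 : p * (D:ℝ) ≤ K * ((t:ℝ)^2 * (1-ε)^(t*V-2)) := by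
        calc p * (D:ℝ) ≤ (4*(m:ℝ)^2*(B:ℝ)^V*(r:ℝ))
              * (Real.exp 1 ^ 2 * (t:ℝ)^2 * (1-ε)^(t*V-2)) := by
              refine le_trans h6 (mul_le_mul_of_nonneg_left hkey (by positivity))
          _ = K * ((t:ℝ)^2 * (1-ε)^(t*V-2)) := by rw [hKdef]; ring
      have h9 : (1-ε)^(t*V-2) ≤ g^t := by
        calc (1-ε)^(t*V-2) ≤ g^(t*V-2) :=
              pow_le_pow_left₀ hε1.le hgle _
          _ ≤ g^t := by
              apply pow_le_pow_of_le_one hg0 hg1.le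
              have : t * 2 ≤ t * V := Nat.mul_le_mul_left t hV2
              omega
      have h10 : K * ((t:ℝ)^2 * (1-ε)^(t*V-2)) ≤ K * (t:ℝ)^2 * g^t := by
        have hK2 : (0:ℝ) ≤ K * (t:ℝ)^2 := by positivity
        calc K * ((t:ℝ)^2 * (1-ε)^(t*V-2)) = K * (t:ℝ)^2 * (1-ε)^(t*V-2) := by ring
          _ ≤ K * (t:ℝ)^2 * g^t := mul_le_mul_of_nonneg_left h9 hK2
      calc p * (D:ℝ) ≤ K * ((t:ℝ)^2 * (1-ε)^(t*V-2)) := h8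
        _ ≤ K * (t:ℝ)^2 * g^t := h10
        _ ≤ 1/4 := hT₀ t htT0
    have hpmatch : (r : ℝ) * (((r : ℝ) ^ (H.edgeFinset.card * t ^ 2)))⁻¹ = p := by
      rw [hpdef, ← hmdef]
    have hDmatch : (2 * H.edgeFinset.card * t ^ 2 * (2 * H.edgeFinset.card
        * (Fintype.card β ^ Fintype.card α
          * ((n - 1).choose (t - 1) ^ 2
            * (n.choose t) ^ (Fintype.card α - 2)))) : ℕ) = D := by
      rw [hDdef, ← hmdef, ← hBdef, ← hVdef, ← hN, ← hN']
    obtain ⟨c, hc⟩ := BRL.no_mono H G n r t hr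
      (by rw [hpmatch]; exact hp4)
      (by rw [hpmatch, hDmatch]; exact hpD)
    exact hc (hRam c)
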